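/- For p, q ≥ 1, for every double form ω of bidegree (p−1,q−1) and every double form θ of bidegree (p,q) on V, one has ⟨g·ω, θ⟩ = ⟨ω, c_g θ⟩; that is, multiplication by the metric g and the contraction c_g are adjoint to each other with respect to the natural induced inner products on double forms. -/

import Mathlib

/-- Double forms on the inner product space `ℝⁿ` (with its standard inner product `g`),
described by their components with respect to the standard orthonormal basis: the component
at bidegree `(p, q)` is a real-valued function of `p` "row" indices and `q` "column" indices
(an element of `Λᵖ(ℝⁿ)* ⊗ Λ^q(ℝⁿ)*` is exactly such a component function which is
antisymmetric in each group of indices). -/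
abbrev DoubleForm (n : ℕ) : Type :=
  ∀ p q : ℕ, (Fin p → Fin n) → (Fin q → Fin n) → ℝ

/-- `ω` is a double form of bidegree `(p, q)`: it is concentrated at `(p, q)` and is
antisymmetric in each group of arguments. -/
def dfHasBidegree (n p q : ℕ) (ω : DoubleForm n) : Prop :=
  (∀ p' q', ¬(p' = p ∧ q' = q) → ω p' q' = 0) ∧
  (∀ (σ : Equiv.Perm (Fin p)) (x : Fin p → Fin n) (y : Fin q → Fin n),
      ω p q (x ∘ σ) y = ((Equiv.Perm.sign σ : ℤ) : ℝ) * ω p q x y) ∧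
  (∀ (τ : Equiv.Perm (Fin q)) (x : Fin p → Fin n) (y : Fin q → Fin n),
      ω p q x (y ∘ τ) = ((Equiv.Perm.sign τ : ℤ) : ℝ) * ω p q x y)

/-- The unit double form (the constant `1` in bidegree `(0,0)`). -/
noncomputable def dfOne (n : ℕ) : DoubleForm n
  | 0, 0, _, _ => 1
  | _, _, _, _ => 0

/-- The metric `g` (the standard inner product) as a `(1,1)` double form. -/
noncomputable def dfG (n : ℕ) : DoubleForm n
  | 1, 1, x, y => if x 0 = y 0 then 1 else 0
  | _, _, _, _ => 0

/-- The product of double forms: the wedge product (determinant convention) on each of the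
two tensor factors, with no extra sign (so that `(θ₁⊗θ₂)·(θ₃⊗θ₄) = (θ₁∧θ₃)⊗(θ₂∧θ₄)`). -/
noncomputable def dfMul (n : ℕ) (ω θ : DoubleForm n) : DoubleForm n :=
  fun p q x y =>
    ∑ p₁ : Fin (p + 1), ∑ q₁ : Fin (q + 1),
      (((p₁ : ℕ).factorial * (p - (p₁ : ℕ)).factorial *
          (q₁ : ℕ).factorial * (q - (q₁ : ℕ)).factorial : ℕ) : ℝ)⁻¹ *
        ∑ σ : Equiv.Perm (Fin p), ∑ τ : Equiv.Perm (Fin q),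
          ((Equiv.Perm.sign σ : ℤ) : ℝ) * ((Equiv.Perm.sign τ : ℤ) : ℝ) *
            (ω (p₁ : ℕ) (q₁ : ℕ)
               (fun i => x (σ (Fin.castLE (Nat.lt_succ_iff.mp p₁.isLt) i)))
               (fun j => y (τ (Fin.castLE (Nat.lt_succ_iff.mp q₁.isLt) j))) *
             θ (p - (p₁ : ℕ)) (q - (q₁ : ℕ))
               (fun i => x (σ ⟨(p₁ : ℕ) + (i : ℕ), by
                  have h1 := i.isLt; have h2 := p₁.isLt; omega⟩))
               (fun j => y (τ ⟨(q₁ : ℕ) + (j : ℕ), by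
                  have h1 := j.isLt; have h2 := q₁.isLt; omega⟩)))

/-- Powers of a double form with respect to the product `dfMul`. -/
noncomputable def dfPow (n : ℕ) (ω : DoubleForm n) : ℕ → DoubleForm n
  | 0 => dfOne n
  | m + 1 => dfMul n (dfPow n ω m) ω

/-- The contraction `c_g` with respect to the standard inner product: it maps the
`(p+1, q+1)` component to the `(p, q)` component by tracing over a pair of slots
(and is zero on bidegrees `(p, 0)` and `(0, q)`). -/
noncomputable def dfContr (n : ℕ) (ω : DoubleForm n) : DoubleForm n :=
  fun p q x y => ∑ i : Fin n, ω (p + 1) (q + 1) (Fin.cons i x) (Fin.cons i y)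

/-- The natural inner product, at bidegree `(p, q)`, induced by `g` on double forms
(for which the monomials with strictly increasing indices are orthonormal). -/
noncomputable def dfInner (n p q : ℕ) (ω θ : DoubleForm n) : ℝ :=
  ((p.factorial * q.factorial : ℕ) : ℝ)⁻¹ *
    ∑ x : Fin p → Fin n, ∑ y : Fin q → Fin n, ω p q x y * θ p q x y

/-- For a bilinear form `h` on `ℝⁿ` (given by its component matrix), the operator `F_h`,
inserting the `g`-symmetric endomorphism `H` associated to `h` into each slot in turn. -/
noncomputable def dfF (n : ℕ) (h : Fin n → Fin n → ℝ) (ω : DoubleForm n) : DoubleForm n :=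
  fun p q x y =>
    (∑ k : Fin p, ∑ i : Fin n, h (x k) i * ω p q (Function.update x k i) y) +
    (∑ k : Fin q, ∑ i : Fin n, h (y k) i * ω p q x (Function.update y k i))

/-- A bilinear form on `ℝⁿ` (given by its component matrix) as a `(1,1)` double form. -/
noncomputable def dfOfMatrix (n : ℕ) (h : Fin n → Fin n → ℝ) : DoubleForm n
  | 1, 1, x, y => h (x 0) (y 0)
  | _, _, _, _ => 0

/-- The component matrix of the `(1,1)` part of a double form. -/
noncomputable def dfMat (n : ℕ) (ω : DoubleForm n) : Fin n → Fin n → ℝ :=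
  fun i j => ω 1 1 (fun _ => i) (fun _ => j)

/-- `R ∈ C²`: a `(2,2)` double form satisfying the symmetry
`R(x₁∧x₂ ⊗ y₁∧y₂) = R(y₁∧y₂ ⊗ x₁∧x₂)`. -/
def dfIsC2 (n : ℕ) (R : DoubleForm n) : Prop :=
  dfHasBidegree n 2 2 R ∧ ∀ x y : Fin 2 → Fin n, R 2 2 x y = R 2 2 y x

/-- The operator `𝔑_R` : `(𝔑_R h)(v, w) = Σᵢ h(R(v, eᵢ)w, eᵢ)`, where the `(3,1)`-tensor of
`R` is determined by `g(R(x,y)z, u) = R(x∧y ⊗ z∧u)`. -/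
noncomputable def curvAction (n : ℕ) (R : DoubleForm n) (h : Fin n → Fin n → ℝ) :
    Fin n → Fin n → ℝ :=
  fun v w => ∑ i : Fin n, ∑ u : Fin n, R 2 2 ![v, i] ![w, u] * h u i

/-- The contraction associated to an arbitrary metric on `ℝⁿ` whose Gram matrix in the
standard basis is `G`: `c_{g'} ω = Σᵢⱼ (G⁻¹)ᵢⱼ ω(vᵢ∧… ⊗ vⱼ∧…)`. -/
noncomputable def dfContrM (n : ℕ) (G : Matrix (Fin n) (Fin n) ℝ) (ω : DoubleForm n) :
    DoubleForm n :=
  fun p q x y => ∑ i : Fin n, ∑ j : Fin n,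
    (G⁻¹) i j * ω (p + 1) (q + 1) (Fin.cons i x) (Fin.cons j y)


open Equiv Finset in
private lemma dfG_apply_nz {n : ℕ} (a b : ℕ) (h : ¬(a = 1 ∧ b = 1)) : dfG n a b = 0 := by
  match a, b with
  | 1, 1 => exact absurd ⟨rfl, rfl⟩ h
  | 0, _ => rfl
  | _+2, _ => rfl
  | 1, 0 => rfl
  | 1, _+2 => rfl

private def precompEquiv {m n : ℕ} (σ : Equiv.Perm (Fin m)) :
    (Fin m → Fin n) ≃ (Fin m → Fin n) where
  toFun x := x ∘ σ
  invFun x := x ∘ σ.symm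
  left_inv x := by funext i; simp
  right_inv x := by funext i; simp

private lemma sum_precomp {m n : ℕ} (σ : Equiv.Perm (Fin m)) (F : (Fin m → Fin n) → ℝ) :
    ∑ x : Fin m → Fin n, F (x ∘ σ) = ∑ x : Fin m → Fin n, F x :=
  Fintype.sum_equiv (precompEquiv σ) _ _ (fun _ => rfl)

private lemma sign_mul_sign_inv {m : ℕ} (σ : Equiv.Perm (Fin m)) :
    ((Equiv.Perm.sign σ : ℤ) : ℝ) * ((Equiv.Perm.sign σ⁻¹ : ℤ) : ℝ) = 1 := by
  rw [Equiv.Perm.sign_inv, ← Int.cast_mul, ← Units.val_mul, Int.units_mul_self]; norm_num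

private lemma cons_at_succ {m n : ℕ} (i : Fin n) (x : Fin m → Fin n) (k : Fin m)
    (h : 1 + (k : ℕ) < m + 1) :
    (Fin.cons i x : Fin (m + 1) → Fin n) ⟨1 + (k : ℕ), h⟩ = x k := by
  have : (⟨1 + (k : ℕ), h⟩ : Fin (m + 1)) = Fin.succ k := by
    ext; simp [Nat.add_comm]
  rw [this, Fin.cons_succ]


private lemma sum_swap4 {α β γ δ : Type*} [Fintype α] [Fintype β] [Fintype γ] [Fintype δ]
    (f : α → β → γ → δ → ℝ) :
    ∑ a : α, ∑ b : β, ∑ c : γ, ∑ d : δ, f a b c d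
      = ∑ c : γ, ∑ d : δ, ∑ a : α, ∑ b : β, f a b c d :=
  calc ∑ a : α, ∑ b : β, ∑ c : γ, ∑ d : δ, f a b c d
      = ∑ a : α, ∑ c : γ, ∑ b : β, ∑ d : δ, f a b c d :=
        Finset.sum_congr rfl fun a _ => Finset.sum_comm
    _ = ∑ c : γ, ∑ a : α, ∑ b : β, ∑ d : δ, f a b c d := Finset.sum_comm
    _ = ∑ c : γ, ∑ a : α, ∑ d : δ, ∑ b : β, f a b c d :=
        Finset.sum_congr rfl fun c _ => Finset.sum_congr rfl fun a _ => Finset.sum_comm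
    _ = ∑ c : γ, ∑ d : δ, ∑ a : α, ∑ b : β, f a b c d :=
        Finset.sum_congr rfl fun c _ => Finset.sum_comm

set_option maxHeartbeats 1000000 in
/-- for `p, q ≥ 1`, `ω` of bidegree `(p−1, q−1)` and `θ` of bidegree `(p, q)`,
`⟨g·ω, θ⟩ = ⟨ω, c_g θ⟩`: multiplication by `g` and the contraction `c_g` are adjoint to each
other with respect to the natural inner products on double forms. -/
theorem stmt_2 (n p q : ℕ) (hp : 1 ≤ p) (hq : 1 ≤ q) (ω θ : DoubleForm n)
    (hω : dfHasBidegree n (p - 1) (q - 1) ω) (hθ : dfHasBidegree n p q θ) :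
    dfInner n p q (dfMul n (dfG n) ω) θ = dfInner n (p - 1) (q - 1) ω (dfContr n θ) := by
  obtain ⟨pm, rfl⟩ : ∃ pm, p = pm + 1 := ⟨p - 1, by omega⟩
  obtain ⟨qm, rfl⟩ : ∃ qm, q = qm + 1 := ⟨q - 1, by omega⟩
  simp only [Nat.add_sub_cancel] at hω ⊢
  have hmul : ∀ (x : Fin (pm+1) → Fin n) (y : Fin (qm+1) → Fin n),
      dfMul n (dfG n) ω (pm+1) (qm+1) x y =
      ((pm.factorial * qm.factorial : ℕ) : ℝ)⁻¹ *
        ∑ σ : Equiv.Perm (Fin (pm+1)), ∑ τ : Equiv.Perm (Fin (qm+1)),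
          ((Equiv.Perm.sign σ : ℤ) : ℝ) * ((Equiv.Perm.sign τ : ℤ) : ℝ) *
            ((if x (σ ⟨0, by omega⟩) = y (τ ⟨0, by omega⟩) then (1:ℝ) else 0) *
              ω pm qm (fun i => x (σ ⟨1 + (i : ℕ), by have := i.isLt; omega⟩))
                (fun j => y (τ ⟨1 + (j : ℕ), by have := j.isLt; omega⟩))) := by
    intro x y
    show (∑ p₁ : Fin (pm + 1 + 1), ∑ q₁ : Fin (qm + 1 + 1), _) = _
    rw [Finset.sum_eq_single (⟨1, by omega⟩ : Fin (pm + 1 + 1))]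
    · rw [Finset.sum_eq_single (⟨1, by omega⟩ : Fin (qm + 1 + 1))]
      · simp only [Fin.val_mk, Nat.add_sub_cancel, Nat.factorial_one, one_mul, mul_one, dfG]
        rfl
      · intro b _ hb
        have hb' : (b : ℕ) ≠ 1 := by intro h; exact hb (Fin.ext (by simp [h]))
        have hz : ∀ c : ℕ, dfG n c (b : ℕ) = 0 := fun c => dfG_apply_nz _ _ (fun hc => hb' hc.2)
        simp [hz]
      · intro h; exact absurd (Finset.mem_univ _) h
    · intro b _ hb
      have hb' : (b : ℕ) ≠ 1 := by intro h; exact hb (Fin.ext (by simp [h]))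
      have hz : ∀ c : ℕ, dfG n (b : ℕ) c = 0 := fun c => dfG_apply_nz _ _ (fun hc => hb' hc.1)
      simp [hz]
    · intro h; exact absurd (Finset.mem_univ _) h
  have key : ∀ (σ : Equiv.Perm (Fin (pm + 1))) (τ : Equiv.Perm (Fin (qm + 1))),
      (∑ x : Fin (pm + 1) → Fin n, ∑ y : Fin (qm + 1) → Fin n,
        (((Equiv.Perm.sign σ : ℤ) : ℝ) * ((Equiv.Perm.sign τ : ℤ) : ℝ) *
          ((if x (σ ⟨0, by omega⟩) = y (τ ⟨0, by omega⟩) then (1 : ℝ) else 0) *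
            ω pm qm (fun i => x (σ ⟨1 + (i : ℕ), by have := i.isLt; omega⟩))
            (fun j => y (τ ⟨1 + (j : ℕ), by have := j.isLt; omega⟩)))) * θ (pm + 1) (qm + 1) x y) =
      ∑ x : Fin (pm + 1) → Fin n, ∑ y : Fin (qm + 1) → Fin n,
        (if x ⟨0, by omega⟩ = y ⟨0, by omega⟩ then (1 : ℝ) else 0) *
          ω pm qm (fun i => x ⟨1 + (i : ℕ), by have := i.isLt; omega⟩)
            (fun j => y ⟨1 + (j : ℕ), by have := j.isLt; omega⟩) *
          θ (pm + 1) (qm + 1) x y := by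
    intro σ τ
    rw [← sum_precomp σ (fun x => ∑ y : Fin (qm + 1) → Fin n,
        (if x ⟨0, by omega⟩ = y ⟨0, by omega⟩ then (1 : ℝ) else 0) *
          ω pm qm (fun i => x ⟨1 + (i : ℕ), by have := i.isLt; omega⟩)
            (fun j => y ⟨1 + (j : ℕ), by have := j.isLt; omega⟩) *
          θ (pm + 1) (qm + 1) x y)]
    refine Finset.sum_congr rfl fun x _ => ?_
    rw [← sum_precomp τ (fun y =>
        (if (x ∘ ⇑σ) ⟨0, by omega⟩ = y ⟨0, by omega⟩ then (1 : ℝ) else 0) *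
          ω pm qm (fun i => (x ∘ ⇑σ) ⟨1 + (i : ℕ), by have := i.isLt; omega⟩)
            (fun j => y ⟨1 + (j : ℕ), by have := j.isLt; omega⟩) *
          θ (pm + 1) (qm + 1) (x ∘ ⇑σ) y)]
    refine Finset.sum_congr rfl fun y _ => ?_
    rw [hθ.2.1 σ x (y ∘ ⇑τ), hθ.2.2 τ x y]
    simp only [Function.comp_apply]
    ring
  have lhs_eq : dfInner n (pm + 1) (qm + 1) (dfMul n (dfG n) ω) θ =
      (((pm + 1).factorial * (qm + 1).factorial : ℕ) : ℝ)⁻¹ *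
        (((pm.factorial * qm.factorial : ℕ) : ℝ)⁻¹ *
          ∑ _σ : Equiv.Perm (Fin (pm + 1)), ∑ _τ : Equiv.Perm (Fin (qm + 1)),
            ∑ x : Fin (pm + 1) → Fin n, ∑ y : Fin (qm + 1) → Fin n,
        (if x ⟨0, by omega⟩ = y ⟨0, by omega⟩ then (1 : ℝ) else 0) *
          ω pm qm (fun i => x ⟨1 + (i : ℕ), by have := i.isLt; omega⟩)
            (fun j => y ⟨1 + (j : ℕ), by have := j.isLt; omega⟩) *
          θ (pm + 1) (qm + 1) x y) := by
    rw [dfInner]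
    congr 1
    calc ∑ x : Fin (pm + 1) → Fin n, ∑ y : Fin (qm + 1) → Fin n,
          dfMul n (dfG n) ω (pm + 1) (qm + 1) x y * θ (pm + 1) (qm + 1) x y
        = ∑ x : Fin (pm + 1) → Fin n, ∑ y : Fin (qm + 1) → Fin n,
            ((pm.factorial * qm.factorial : ℕ) : ℝ)⁻¹ *
              ∑ σ : Equiv.Perm (Fin (pm + 1)), ∑ τ : Equiv.Perm (Fin (qm + 1)),
                (((Equiv.Perm.sign σ : ℤ) : ℝ) * ((Equiv.Perm.sign τ : ℤ) : ℝ) *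
          ((if x (σ ⟨0, by omega⟩) = y (τ ⟨0, by omega⟩) then (1 : ℝ) else 0) *
            ω pm qm (fun i => x (σ ⟨1 + (i : ℕ), by have := i.isLt; omega⟩))
            (fun j => y (τ ⟨1 + (j : ℕ), by have := j.isLt; omega⟩)))) * θ (pm + 1) (qm + 1) x y := by
          refine Finset.sum_congr rfl fun x _ => Finset.sum_congr rfl fun y _ => ?_
          rw [hmul, mul_assoc]
          simp only [Finset.sum_mul]
      _ = ((pm.factorial * qm.factorial : ℕ) : ℝ)⁻¹ *
            ∑ x : Fin (pm + 1) → Fin n, ∑ y : Fin (qm + 1) → Fin n,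
              ∑ σ : Equiv.Perm (Fin (pm + 1)), ∑ τ : Equiv.Perm (Fin (qm + 1)),
                (((Equiv.Perm.sign σ : ℤ) : ℝ) * ((Equiv.Perm.sign τ : ℤ) : ℝ) *
          ((if x (σ ⟨0, by omega⟩) = y (τ ⟨0, by omega⟩) then (1 : ℝ) else 0) *
            ω pm qm (fun i => x (σ ⟨1 + (i : ℕ), by have := i.isLt; omega⟩))
            (fun j => y (τ ⟨1 + (j : ℕ), by have := j.isLt; omega⟩)))) * θ (pm + 1) (qm + 1) x y := by
          simp only [← Finset.mul_sum]
      _ = ((pm.factorial * qm.factorial : ℕ) : ℝ)⁻¹ *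
            ∑ σ : Equiv.Perm (Fin (pm + 1)), ∑ τ : Equiv.Perm (Fin (qm + 1)),
              ∑ x : Fin (pm + 1) → Fin n, ∑ y : Fin (qm + 1) → Fin n,
                (((Equiv.Perm.sign σ : ℤ) : ℝ) * ((Equiv.Perm.sign τ : ℤ) : ℝ) *
          ((if x (σ ⟨0, by omega⟩) = y (τ ⟨0, by omega⟩) then (1 : ℝ) else 0) *
            ω pm qm (fun i => x (σ ⟨1 + (i : ℕ), by have := i.isLt; omega⟩))
            (fun j => y (τ ⟨1 + (j : ℕ), by have := j.isLt; omega⟩)))) * θ (pm + 1) (qm + 1) x y := by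
          rw [sum_swap4]
      _ = ((pm.factorial * qm.factorial : ℕ) : ℝ)⁻¹ *
            ∑ _σ : Equiv.Perm (Fin (pm + 1)), ∑ _τ : Equiv.Perm (Fin (qm + 1)),
              ∑ x : Fin (pm + 1) → Fin n, ∑ y : Fin (qm + 1) → Fin n,
        (if x ⟨0, by omega⟩ = y ⟨0, by omega⟩ then (1 : ℝ) else 0) *
          ω pm qm (fun i => x ⟨1 + (i : ℕ), by have := i.isLt; omega⟩)
            (fun j => y ⟨1 + (j : ℕ), by have := j.isLt; omega⟩) *
          θ (pm + 1) (qm + 1) x y :=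
          congrArg _ (Finset.sum_congr rfl fun σ _ => Finset.sum_congr rfl fun τ _ => key σ τ)
  have hs : (∑ x : Fin (pm + 1) → Fin n, ∑ y : Fin (qm + 1) → Fin n,
        (if x ⟨0, by omega⟩ = y ⟨0, by omega⟩ then (1 : ℝ) else 0) *
          ω pm qm (fun i => x ⟨1 + (i : ℕ), by have := i.isLt; omega⟩)
            (fun j => y ⟨1 + (j : ℕ), by have := j.isLt; omega⟩) *
          θ (pm + 1) (qm + 1) x y) =
      ∑ x' : Fin pm → Fin n, ∑ y' : Fin qm → Fin n, ∑ i : Fin n,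
        ω pm qm x' y' * θ (pm + 1) (qm + 1) (Fin.cons i x') (Fin.cons i y') := by
    calc (∑ x : Fin (pm + 1) → Fin n, ∑ y : Fin (qm + 1) → Fin n,
        (if x ⟨0, by omega⟩ = y ⟨0, by omega⟩ then (1 : ℝ) else 0) *
          ω pm qm (fun i => x ⟨1 + (i : ℕ), by have := i.isLt; omega⟩)
            (fun j => y ⟨1 + (j : ℕ), by have := j.isLt; omega⟩) *
          θ (pm + 1) (qm + 1) x y)
        = ∑ z : Fin n × (Fin pm → Fin n), ∑ w : Fin n × (Fin qm → Fin n),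
            (if (Fin.cons z.1 z.2 : Fin (pm + 1) → Fin n) ⟨0, by omega⟩ = (Fin.cons w.1 w.2 : Fin (qm + 1) → Fin n) ⟨0, by omega⟩ then (1 : ℝ) else 0) *
          ω pm qm (fun i => (Fin.cons z.1 z.2 : Fin (pm + 1) → Fin n) ⟨1 + (i : ℕ), by have := i.isLt; omega⟩)
            (fun j => (Fin.cons w.1 w.2 : Fin (qm + 1) → Fin n) ⟨1 + (j : ℕ), by have := j.isLt; omega⟩) *
          θ (pm + 1) (qm + 1) (Fin.cons z.1 z.2 : Fin (pm + 1) → Fin n) (Fin.cons w.1 w.2 : Fin (qm + 1) → Fin n) :=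
          by
            refine (Fintype.sum_equiv (Fin.consEquiv fun _ => Fin n) _ _ fun z => ?_).symm
            refine Fintype.sum_equiv (Fin.consEquiv fun _ => Fin n) _ _ fun w => ?_
            rfl
      _ = ∑ i : Fin n, ∑ x' : Fin pm → Fin n, ∑ j : Fin n, ∑ y' : Fin qm → Fin n,
            (if i = j then (1 : ℝ) else 0) *
              (ω pm qm x' y' * θ (pm + 1) (qm + 1) (Fin.cons i x') (Fin.cons j y')) := by
          rw [Fintype.sum_prod_type]
          refine Finset.sum_congr rfl fun i _ => Finset.sum_congr rfl fun x' _ => ?_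
          rw [Fintype.sum_prod_type]
          refine Finset.sum_congr rfl fun j _ => Finset.sum_congr rfl fun y' _ => ?_
          simp only [Fin.mk_zero, Fin.cons_zero, cons_at_succ]
          ring
      _ = ∑ i : Fin n, ∑ x' : Fin pm → Fin n, ∑ y' : Fin qm → Fin n,
            ω pm qm x' y' * θ (pm + 1) (qm + 1) (Fin.cons i x') (Fin.cons i y') := by
          refine Finset.sum_congr rfl fun i _ => Finset.sum_congr rfl fun x' _ => ?_
          rw [Finset.sum_comm]
          refine Finset.sum_congr rfl fun y' _ => ?_
          simp only [ite_mul, one_mul, zero_mul, Finset.sum_ite_eq, Finset.mem_univ, if_true]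
      _ = ∑ x' : Fin pm → Fin n, ∑ i : Fin n, ∑ y' : Fin qm → Fin n,
            ω pm qm x' y' * θ (pm + 1) (qm + 1) (Fin.cons i x') (Fin.cons i y') := Finset.sum_comm
      _ = ∑ x' : Fin pm → Fin n, ∑ y' : Fin qm → Fin n, ∑ i : Fin n,
            ω pm qm x' y' * θ (pm + 1) (qm + 1) (Fin.cons i x') (Fin.cons i y') :=
          Finset.sum_congr rfl fun x' _ => Finset.sum_comm
  have rhs_eq : dfInner n pm qm ω (dfContr n θ) =
      ((pm.factorial * qm.factorial : ℕ) : ℝ)⁻¹ * (∑ x : Fin (pm + 1) → Fin n, ∑ y : Fin (qm + 1) → Fin n,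
        (if x ⟨0, by omega⟩ = y ⟨0, by omega⟩ then (1 : ℝ) else 0) *
          ω pm qm (fun i => x ⟨1 + (i : ℕ), by have := i.isLt; omega⟩)
            (fun j => y ⟨1 + (j : ℕ), by have := j.isLt; omega⟩) *
          θ (pm + 1) (qm + 1) x y) := by
    rw [dfInner]
    congr 1
    rw [hs]
    refine (Finset.sum_congr rfl fun x' _ => Finset.sum_congr rfl fun y' _ => ?_).symm
    rw [dfContr, Finset.mul_sum]
  rw [lhs_eq, rhs_eq]
  simp only [Finset.sum_const, Finset.card_univ, Fintype.card_perm, Fintype.card_fin,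
    nsmul_eq_mul]
  have h1 : ((pm + 1).factorial : ℝ) ≠ 0 := Nat.cast_ne_zero.mpr (Nat.factorial_ne_zero _)
  have h2 : ((qm + 1).factorial : ℝ) ≠ 0 := Nat.cast_ne_zero.mpr (Nat.factorial_ne_zero _)
  push_cast
  field_simp
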